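/- Let d, k > 0. Define, for u ∈ (0, k²/d²), h_O(u) = (k(u+1) − √(k²(1−u)² + 4d²u²))² / (4u(k² − ud²)). Then h_O attains a strict global maximum on (0, k²/d²) at u* = k²/(k² + 2d²), and 1 − h_O(u*) = 2d(√(d² + k²) − d)/k². (Since h_O(u) = b²/a² for the ellipse with parameter u circumscribed about the parallelogram with vertices (0,0), (l,0), (d,k), (l+d,k), this identifies the unique ellipse of minimal eccentricity circumscribed about the parallelogram and gives 1 − b²/a² for it.) -/

import Mathlib

set_option maxHeartbeats 1000000

theorem stmt_16 (d k : ℝ) (hd : 0 < d) (hk : 0 < k)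
    (hO : ℝ → ℝ)
    (hhO : ∀ u, hO u =
      (k * (u + 1) - Real.sqrt (k ^ 2 * (1 - u) ^ 2 + 4 * d ^ 2 * u ^ 2)) ^ 2
        / (4 * u * (k ^ 2 - u * d ^ 2))) :
    k ^ 2 / (k ^ 2 + 2 * d ^ 2) ∈ Set.Ioo (0 : ℝ) (k ^ 2 / d ^ 2) ∧
    (∀ u ∈ Set.Ioo (0 : ℝ) (k ^ 2 / d ^ 2), u ≠ k ^ 2 / (k ^ 2 + 2 * d ^ 2) →
      hO u < hO (k ^ 2 / (k ^ 2 + 2 * d ^ 2))) ∧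
    1 - hO (k ^ 2 / (k ^ 2 + 2 * d ^ 2)) = 2 * d * (Real.sqrt (d ^ 2 + k ^ 2) - d) / k ^ 2 := by
  have hSpos : (0:ℝ) < k ^ 2 + 2 * d ^ 2 := by positivity
  obtain ⟨v, hv_def⟩ : ∃ v : ℝ, v = k ^ 2 / (k ^ 2 + 2 * d ^ 2) := ⟨_, rfl⟩
  rw [← hv_def]
  have hv : v * (k ^ 2 + 2 * d ^ 2) = k ^ 2 := by
    rw [hv_def]; field_simp
  have hv0 : 0 < v := by rw [hv_def]; positivity
  have hmem : v ∈ Set.Ioo (0:ℝ) (k ^ 2 / d ^ 2) := by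
    refine ⟨hv0, ?_⟩
    rw [hv_def, div_lt_div_iff₀ hSpos (by positivity)]
    nlinarith [pow_pos hd 2, pow_pos hk 2]
  have hvd : v * d ^ 2 < k ^ 2 := by
    have := hmem.2
    rw [lt_div_iff₀ (by positivity : (0:ℝ) < d ^ 2)] at this
    linarith
  -- key representation
  have key : ∀ u ∈ Set.Ioo (0:ℝ) (k ^ 2 / d ^ 2),
      hO u = (k * (u + 1) - Real.sqrt (k ^ 2 * (1 - u) ^ 2 + 4 * d ^ 2 * u ^ 2)) /
        (k * (u + 1) + Real.sqrt (k ^ 2 * (1 - u) ^ 2 + 4 * d ^ 2 * u ^ 2)) := by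
    rintro u ⟨hu0, hu1⟩
    have hud : u * d ^ 2 < k ^ 2 := by
      rw [lt_div_iff₀ (by positivity : (0:ℝ) < d ^ 2)] at hu1; linarith
    set Q := Real.sqrt (k ^ 2 * (1 - u) ^ 2 + 4 * d ^ 2 * u ^ 2) with hQdef
    have hQ2 : Q ^ 2 = k ^ 2 * (1 - u) ^ 2 + 4 * d ^ 2 * u ^ 2 :=
      Real.sq_sqrt (by positivity)
    have hQ0 : 0 ≤ Q := Real.sqrt_nonneg _
    have hQlt : Q < k * (u + 1) := by
      rw [hQdef, show k * (u + 1) = |k * (u + 1)| from (abs_of_pos (by positivity)).symm,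
        ← Real.sqrt_sq_eq_abs]
      apply Real.sqrt_lt_sqrt (by positivity)
      nlinarith [mul_pos hu0 (sub_pos.mpr hud)]
    have hne : k * (u + 1) - Q ≠ 0 := by linarith
    rw [hhO u, ← hQdef]
    have hden : 4 * u * (k ^ 2 - u * d ^ 2) = (k * (u + 1) - Q) * (k * (u + 1) + Q) := by
      linear_combination hQ2
    rw [hden, sq, mul_div_mul_left _ _ hne]
  refine ⟨hmem, ?_, ?_⟩
  · intro u hu hne
    obtain ⟨hu0, hu1⟩ := hu
    rw [key u ⟨hu0, hu1⟩, key v hmem]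
    set Q := Real.sqrt (k ^ 2 * (1 - u) ^ 2 + 4 * d ^ 2 * u ^ 2) with hQdef
    set Qs := Real.sqrt (k ^ 2 * (1 - v) ^ 2 + 4 * d ^ 2 * v ^ 2) with hQsdef
    have hQ2 : Q ^ 2 = k ^ 2 * (1 - u) ^ 2 + 4 * d ^ 2 * u ^ 2 :=
      Real.sq_sqrt (by positivity)
    have hQs2 : Qs ^ 2 = k ^ 2 * (1 - v) ^ 2 + 4 * d ^ 2 * v ^ 2 :=
      Real.sq_sqrt (by positivity)
    have hQ0 : 0 < Q := Real.sqrt_pos.mpr (by positivity)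
    have hQs0 : 0 < Qs := Real.sqrt_pos.mpr (by positivity)
    have hud : u * d ^ 2 < k ^ 2 := by
      rw [lt_div_iff₀ (by positivity : (0:ℝ) < d ^ 2)] at hu1; linarith
    have hQlt : Q < k * (u + 1) := by
      rw [hQdef, show k * (u + 1) = |k * (u + 1)| from (abs_of_pos (by positivity)).symm,
        ← Real.sqrt_sq_eq_abs]
      apply Real.sqrt_lt_sqrt (by positivity)
      nlinarith [mul_pos hu0 (sub_pos.mpr hud)]
    have hQslt : Qs < k * (v + 1) := by
      rw [hQsdef, show k * (v + 1) = |k * (v + 1)| from (abs_of_pos (by positivity)).symm,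
        ← Real.sqrt_sq_eq_abs]
      apply Real.sqrt_lt_sqrt (by positivity)
      nlinarith [mul_pos hv0 (sub_pos.mpr hvd)]
    have hb : (k ^ 2 + 2 * d ^ 2) * (k * (v + 1)) = 2 * k * (k ^ 2 + d ^ 2) := by
      linear_combination k * hv
    have hc : (k ^ 2 + 2 * d ^ 2) ^ 2 * Qs ^ 2 = 4 * d ^ 2 * k ^ 2 * (d ^ 2 + k ^ 2) := by
      rw [hQs2]
      linear_combination (k ^ 2 * (v * (k ^ 2 + 2 * d ^ 2) + k ^ 2 - 2 * (k ^ 2 + 2 * d ^ 2))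
        + 4 * d ^ 2 * (v * (k ^ 2 + 2 * d ^ 2) + k ^ 2)) * hv
    have hne' : k ^ 2 - u * (k ^ 2 + 2 * d ^ 2) ≠ 0 := by
      intro h
      apply hne
      have : (u - v) * (k ^ 2 + 2 * d ^ 2) = 0 := by linarith
      have := mul_eq_zero.mp this
      rcases this with h' | h'
      · linarith
      · exact absurd h' hSpos.ne'
    have hsq : 0 < (k ^ 2 - u * (k ^ 2 + 2 * d ^ 2)) ^ 2 :=
      lt_of_le_of_ne (sq_nonneg _) (Ne.symm (pow_ne_zero 2 hne'))
    have hid : (k ^ 2 + 2 * d ^ 2) ^ 2 * ((k * (v + 1) * Q) ^ 2 - (k * (u + 1) * Qs) ^ 2) =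
        4 * k ^ 2 * (d ^ 2 + k ^ 2) * (k ^ 2 - u * (k ^ 2 + 2 * d ^ 2)) ^ 2 := by
      linear_combination (Q ^ 2 * ((k ^ 2 + 2 * d ^ 2) * (k * (v + 1)) + 2 * k * (k ^ 2 + d ^ 2))) * hb
        - (k * (u + 1)) ^ 2 * hc + (2 * k * (k ^ 2 + d ^ 2)) ^ 2 * hQ2
    have h4 : 0 < 4 * k ^ 2 * (d ^ 2 + k ^ 2) * (k ^ 2 - u * (k ^ 2 + 2 * d ^ 2)) ^ 2 :=
      mul_pos (by positivity) hsq
    have hS2 : 0 < (k ^ 2 + 2 * d ^ 2) ^ 2 := by positivity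
    have hsq' : (k * (u + 1) * Qs) ^ 2 < (k * (v + 1) * Q) ^ 2 := by
      have h := h4
      rw [← hid] at h
      have hX := (mul_pos_iff_of_pos_left hS2).mp h
      linarith
    have hApos : 0 < k * (u + 1) := by positivity
    have hAspos : 0 < k * (v + 1) := by positivity
    have hcross : k * (u + 1) * Qs < k * (v + 1) * Q :=
      lt_of_pow_lt_pow_left₀ 2 (le_of_lt (mul_pos hAspos hQ0)) hsq'
    rw [div_lt_div_iff₀ (by linarith) (by linarith)]
    nlinarith [hcross]
  · rw [key v hmem]
    set t := Real.sqrt (d ^ 2 + k ^ 2) with ht_def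
    have ht2 : t ^ 2 = d ^ 2 + k ^ 2 := Real.sq_sqrt (by positivity)
    have ht0 : 0 < t := Real.sqrt_pos.mpr (by positivity)
    have htd : d < t := by nlinarith [ht2]
    have harg : k ^ 2 * (1 - v) ^ 2 + 4 * d ^ 2 * v ^ 2 =
        (2 * d * k / (k ^ 2 + 2 * d ^ 2)) ^ 2 * (d ^ 2 + k ^ 2) := by
      rw [hv_def]; field_simp; ring
    have hQs : Real.sqrt (k ^ 2 * (1 - v) ^ 2 + 4 * d ^ 2 * v ^ 2) =
        2 * d * k / (k ^ 2 + 2 * d ^ 2) * t := by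
      rw [harg, Real.sqrt_mul (sq_nonneg _), Real.sqrt_sq (by positivity), ht_def]
    rw [hQs]
    have hnum : k * (v + 1) - 2 * d * k / (k ^ 2 + 2 * d ^ 2) * t =
        2 * k * t / (k ^ 2 + 2 * d ^ 2) * (t - d) := by
      have e : k * (v + 1) = 2 * k * t ^ 2 / (k ^ 2 + 2 * d ^ 2) := by
        rw [eq_div_iff hSpos.ne']; linear_combination k * hv - 2 * k * ht2
      rw [e]; ring
    have hden : k * (v + 1) + 2 * d * k / (k ^ 2 + 2 * d ^ 2) * t =
        2 * k * t / (k ^ 2 + 2 * d ^ 2) * (t + d) := by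
      have e : k * (v + 1) = 2 * k * t ^ 2 / (k ^ 2 + 2 * d ^ 2) := by
        rw [eq_div_iff hSpos.ne']; linear_combination k * hv - 2 * k * ht2
      rw [e]; ring
    rw [hnum, hden, mul_div_mul_left _ _ (by positivity : 2 * k * t / (k ^ 2 + 2 * d ^ 2) ≠ 0)]
    have htd0 : (0:ℝ) < t + d := by linarith
    have h1 : 1 - (t - d) / (t + d) = 2 * d / (t + d) := by
      field_simp
      ring
    rw [h1, div_eq_div_iff htd0.ne' (by positivity : (k ^ 2:ℝ) ≠ 0)]
    linear_combination (-2 * d) * ht2
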